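/- For all integers k, m ≥ 2 and every constant γ > 0, there exist a constant c = c(γ, k, m) > 0 and an integer n₀ = n₀(γ, k, m) such that for every k-graph H on n ≥ n₀ vertices with δ₁(H) ≥ (1/2 + γ)·C(n,k−1) and every vertex v ∈ V(H), there are at least c·n^{km−1} copies of K_k^k(m) in H containing v. -/

import Mathlib

open Finset

/-- `A` is the vertex set of a copy of the hypergraph with vertex type `V` and edge set `EF`
inside the hypergraph on `Fin n` with edge set `E`. -/
def IsCopy {n : ℕ} {V : Type} [Fintype V] [DecidableEq V] (E : Finset (Finset (Fin n)))
    (EF : Finset (Finset V)) (A : Finset (Fin n)) : Prop :=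
  ∃ f : V ↪ Fin n, Finset.map f Finset.univ = A ∧ ∀ e ∈ EF, e.map f ∈ E

/-- The induced subhypergraph of `E` on `S` has an `F`-factor, where `F` has vertex type `V`
and edge set `EF`: there are pairwise vertex-disjoint copies of `F` covering exactly `S`. -/
def HasFactorOn {n : ℕ} {V : Type} [Fintype V] [DecidableEq V] (E : Finset (Finset (Fin n)))
    (EF : Finset (Finset V)) (S : Finset (Fin n)) : Prop :=
  ∃ P : Finset (Finset (Fin n)), (∀ A ∈ P, IsCopy E EF A) ∧
    (P : Set (Finset (Fin n))).PairwiseDisjoint id ∧ P.biUnion id = S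

/-- `x` is `(F, i, η)`-close to `y`. -/
def CloseTo {n : ℕ} {V : Type} [Fintype V] [DecidableEq V] (E : Finset (Finset (Fin n)))
    (EF : Finset (Finset V)) (i : ℕ) (η : ℝ) (x y : Fin n) : Prop :=
  η * (n : ℝ) ^ (i * Fintype.card V - 1) ≤
    (({S : Finset (Fin n) | S.card = i * Fintype.card V - 1 ∧ x ∉ S ∧ y ∉ S ∧
      HasFactorOn E EF (insert x S) ∧ HasFactorOn E EF (insert y S)}).ncard : ℝ)

/-- `H` is `(F, i, η)`-closed. -/
def IsClosedGraph {n : ℕ} {V : Type} [Fintype V] [DecidableEq V] (E : Finset (Finset (Fin n)))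
    (EF : Finset (Finset V)) (i : ℕ) (η : ℝ) : Prop :=
  ∀ x y : Fin n, x ≠ y → CloseTo E EF i η x y

/-- `Ñ_{F,i,η}(x)`: the set of vertices `(F, i, η)`-close to `x`. -/
def Ntilde {n : ℕ} {V : Type} [Fintype V] [DecidableEq V] (E : Finset (Finset (Fin n)))
    (EF : Finset (Finset V)) (i : ℕ) (η : ℝ) (x : Fin n) : Set (Fin n) :=
  {y | CloseTo E EF i η x y}

/-- Degree of the set `T` in the `k`-graph with edge set `E`. -/
noncomputable def degOn {n : ℕ} (E : Finset (Finset (Fin n))) (k : ℕ) (T : Finset (Fin n)) : ℕ :=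
  ({S : Finset (Fin n) | S.card = k - T.card ∧ Disjoint S T ∧ S ∪ T ∈ E}).ncard

/-- Edge set of the complete `k`-graph `K_t^k` on `Fin t`. -/
def cliqueEdges (t k : ℕ) : Finset (Finset (Fin t)) :=
  Finset.powersetCard k (Finset.univ : Finset (Fin t))

/-- Edge set of the complete `k`-partite `k`-graph `K_k^k(m)` with parts of size `m`. -/
def multipartiteEdges (k m : ℕ) : Finset (Finset (Fin k × Fin m)) :=
  Finset.univ.filter (fun e : Finset (Fin k × Fin m) =>
    ∀ i : Fin k, (e.filter (fun v => v.1 = i)).card = 1)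

set_option linter.unusedSectionVars false
set_option maxHeartbeats 1000000

namespace CopiesAux

variable {n R M : ℕ}

section Inner

variable (χ : (Fin (R + 1) → Fin n) → Prop) [DecidablePred χ]

/-- Partial blow-up predicate: rows `< j` fully blown up, rows `≥ j` only column `0`. -/
def Q (j : ℕ) (ψ : Fin (R + 1) → Fin (M + 1) → Fin n) : Prop :=
  ∀ t : Fin (R + 1) → Fin (M + 1), (∀ i : Fin (R + 1), j ≤ (i : ℕ) → t i = 0) →
    χ fun i => ψ i (t i)

instance (j : ℕ) : DecidablePred (Q (M := M) χ j) := fun ψ => by unfold Q; infer_instance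

/-- Count of partial blow-ups. -/
def cnt (j : ℕ) : ℕ := #(univ.filter (Q (M := M) χ j))

def comb (jF : Fin (R + 1)) (c : Fin (M + 1) → Fin n)
    (ρ : {i : Fin (R + 1) // i ≠ jF} → Fin (M + 1) → Fin n) :
    Fin (R + 1) → Fin (M + 1) → Fin n :=
  fun i => if h : i = jF then c else ρ ⟨i, h⟩

/-- Splitting a matrix into the `jF` row and the rest. -/
def combE (jF : Fin (R + 1)) : (Fin (R + 1) → Fin (M + 1) → Fin n) ≃
    (Fin (M + 1) → Fin n) × ({i : Fin (R + 1) // i ≠ jF} → Fin (M + 1) → Fin n) where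
  toFun ψ := (ψ jF, fun i => ψ i.1)
  invFun p := comb jF p.1 p.2
  left_inv ψ := by
    funext i
    simp only [comb]
    split_ifs with h
    · subst h; rfl
    · rfl
  right_inv p := by
    obtain ⟨c, ρ⟩ := p
    refine Prod.ext ?_ ?_
    · simp [comb]
    · funext i
      simp only [comb, dif_neg i.2]

def Rp (j : ℕ) (jF : Fin (R + 1)) (ρ : {i : Fin (R + 1) // i ≠ jF} → Fin (M + 1) → Fin n)
    (x : Fin n) : Prop :=
  Q (M := M) χ j (comb jF (fun _ => x) ρ)

instance (j : ℕ) (jF : Fin (R + 1)) (ρ : {i : Fin (R + 1) // i ≠ jF} → Fin (M + 1) → Fin n)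
    (x : Fin n) : Decidable (Rp χ j jF ρ x) := by unfold Rp; infer_instance

lemma Q_comb_iff {j : ℕ} (hj : j < R + 1) (c : Fin (M + 1) → Fin n)
    (ρ : {i : Fin (R + 1) // i ≠ (⟨j, hj⟩ : Fin (R + 1))} → Fin (M + 1) → Fin n) :
    Q (M := M) χ j (comb ⟨j, hj⟩ c ρ) ↔ Rp χ j ⟨j, hj⟩ ρ (c 0) := by
  have key : ∀ t : Fin (R + 1) → Fin (M + 1), (∀ i : Fin (R + 1), j ≤ (i : ℕ) → t i = 0) →
      (fun i => comb ⟨j, hj⟩ c ρ i (t i)) =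
      (fun i => comb ⟨j, hj⟩ (fun _ => c 0) ρ i (t i)) := by
    intro t ht
    funext i
    simp only [comb]
    split_ifs with h
    · subst h
      rw [ht ⟨j, hj⟩ le_rfl]
    · rfl
  constructor
  · intro H t ht
    rw [← key t ht]
    exact H t ht
  · intro H t ht
    rw [key t ht]
    exact H t ht

lemma Q_succ_comb_iff {j : ℕ} (hj : j < R + 1) (c : Fin (M + 1) → Fin n)
    (ρ : {i : Fin (R + 1) // i ≠ (⟨j, hj⟩ : Fin (R + 1))} → Fin (M + 1) → Fin n) :
    Q (M := M) χ (j + 1) (comb ⟨j, hj⟩ c ρ) ↔ ∀ s, Rp χ j ⟨j, hj⟩ ρ (c s) := by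
  set jF : Fin (R + 1) := ⟨j, hj⟩ with hjF
  constructor
  · intro H s t ht
    set t' : Fin (R + 1) → Fin (M + 1) := fun i => if i = jF then s else t i with ht'
    have ht'2 : ∀ i : Fin (R + 1), j + 1 ≤ (i : ℕ) → t' i = 0 := by
      intro i hi
      have hne : i ≠ jF := by
        intro hEq
        rw [hEq] at hi
        have : (jF : ℕ) = j := rfl
        omega
      simp only [ht', if_neg hne]
      exact ht i (by omega)
    have := H t' ht'2
    convert this using 1
    funext i
    simp only [comb, t']
    split_ifs with h
    · subst h; simp
    · rfl
  · intro H t ht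
    have := H (t jF) (fun i => if i = jF then 0 else t i) ?_
    · convert this using 1
      funext i
      simp only [comb]
      split_ifs with h
      · subst h; rfl
      · rfl
    · intro i hi
      by_cases h : i = jF
      · simp [h]
      · have : (i : ℕ) ≠ j := by
          intro hv
          exact h (Fin.ext hv)
        simp only [if_neg h]
        exact ht i (by omega)


lemma cnt_succ_eq {j : ℕ} (hj : j < R + 1) :
    cnt (M := M) χ (j + 1) =
      ∑ ρ : {i : Fin (R + 1) // i ≠ (⟨j, hj⟩ : Fin (R + 1))} → Fin (M + 1) → Fin n,
        (#(univ.filter (fun x : Fin n => Rp χ j ⟨j, hj⟩ ρ x))) ^ (M + 1) := by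
  set jF : Fin (R + 1) := ⟨j, hj⟩
  rw [cnt, Finset.card_filter]
  rw [← Equiv.sum_comp ((combE (n := n) (R := R) (M := M) jF).symm)]
  rw [Fintype.sum_prod_type]
  rw [Finset.sum_comm]
  have hpt : ∀ ρ, ∀ c : Fin (M + 1) → Fin n,
      (if Q (M := M) χ (j + 1) ((combE (n := n) jF).symm (c, ρ)) then (1:ℕ) else 0) =
      ∏ s : Fin (M + 1), if Rp χ j jF ρ (c s) then 1 else 0 := by
    intro ρ c
    rw [Fintype.prod_boole]
    congr 1
    simp only [combE, Equiv.coe_fn_symm_mk]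
    rw [Q_succ_comb_iff χ hj]
  calc ∑ ρ, ∑ c : Fin (M + 1) → Fin n,
        (if Q (M := M) χ (j + 1) ((combE (n := n) jF).symm (c, ρ)) then (1:ℕ) else 0)
      = ∑ ρ, ∑ c : Fin (M + 1) → Fin n, ∏ s : Fin (M + 1),
          if Rp χ j jF ρ (c s) then (1:ℕ) else 0 := by
        refine Finset.sum_congr rfl fun ρ _ => Finset.sum_congr rfl fun c _ => hpt ρ c
    _ = ∑ ρ, (∑ x : Fin n, if Rp χ j jF ρ x then (1:ℕ) else 0) ^ (M + 1) := by
        refine Finset.sum_congr rfl fun ρ _ => ?_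
        rw [← Fintype.prod_sum (fun _ x => if Rp χ j jF ρ x then (1:ℕ) else 0)]
        rw [Finset.prod_const]
        rw [Finset.card_univ, Fintype.card_fin]
    _ = _ := by
        refine Finset.sum_congr rfl fun ρ _ => ?_
        rw [Finset.card_filter]

lemma cnt_eq {j : ℕ} (hj : j < R + 1) :
    cnt (M := M) χ j =
      (∑ ρ : {i : Fin (R + 1) // i ≠ (⟨j, hj⟩ : Fin (R + 1))} → Fin (M + 1) → Fin n,
        #(univ.filter (fun x : Fin n => Rp χ j ⟨j, hj⟩ ρ x))) * n ^ M := by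
  set jF : Fin (R + 1) := ⟨j, hj⟩
  rw [cnt, Finset.card_filter]
  rw [← Equiv.sum_comp ((combE (n := n) (R := R) (M := M) jF).symm)]
  rw [Fintype.sum_prod_type, Finset.sum_comm, Finset.sum_mul]
  refine Finset.sum_congr rfl fun ρ _ => ?_
  have hpt : ∀ c : Fin (M + 1) → Fin n,
      (if Q (M := M) χ j ((combE (n := n) jF).symm (c, ρ)) then (1:ℕ) else 0) =
      ∏ s : Fin (M + 1), if (0 : Fin (M + 1)) = s then (if Rp χ j jF ρ (c s) then 1 else 0)
        else 1 := by
    intro c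
    rw [Finset.prod_ite_eq]
    simp only [Finset.mem_univ, if_true]
    congr 1
    simp only [combE, Equiv.coe_fn_symm_mk]
    rw [Q_comb_iff χ hj]
  calc ∑ c : Fin (M + 1) → Fin n,
        (if Q (M := M) χ j ((combE (n := n) jF).symm (c, ρ)) then (1:ℕ) else 0)
      = ∑ c : Fin (M + 1) → Fin n, ∏ s : Fin (M + 1),
          if (0 : Fin (M + 1)) = s then (if Rp χ j jF ρ (c s) then (1:ℕ) else 0) else 1 := by
        exact Finset.sum_congr rfl fun c _ => hpt c
    _ = ∏ s : Fin (M + 1), ∑ x : Fin n,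
          (if (0 : Fin (M + 1)) = s then (if Rp χ j jF ρ x then (1:ℕ) else 0) else 1) := by
        rw [← Fintype.prod_sum (fun (s : Fin (M + 1)) (x : Fin n) =>
          if (0 : Fin (M + 1)) = s then (if Rp χ j jF ρ x then (1:ℕ) else 0) else 1)]
    _ = _ := by
        rw [← Finset.mul_prod_erase univ _ (Finset.mem_univ (0 : Fin (M + 1)))]
        congr 1
        · rw [Finset.card_filter]
          exact Finset.sum_congr rfl fun x _ => by rw [if_pos rfl]
        · have hcon : ∀ s ∈ univ.erase (0 : Fin (M + 1)),
              (∑ x : Fin n, if (0 : Fin (M + 1)) = s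
                then (if Rp χ j jF ρ x then (1:ℕ) else 0) else 1) = n := by
            intro s hs
            have hs0 : ¬ ((0 : Fin (M + 1)) = s) := (Finset.ne_of_mem_erase hs).symm
            simp only [if_neg hs0]
            simp
          rw [Finset.prod_congr rfl hcon, Finset.prod_const,
            Finset.card_erase_of_mem (Finset.mem_univ _), Finset.card_univ, Fintype.card_fin]
          simp


def rowE : (Fin (R + 1) → Fin (M + 1) → Fin n) ≃
    (Fin (R + 1) → Fin n) × (Fin (R + 1) → {s : Fin (M + 1) // s ≠ 0} → Fin n) where
  toFun ψ := (fun i => ψ i 0, fun i s => ψ i s.1)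
  invFun p := fun i s => if h : s = 0 then p.1 i else p.2 i ⟨s, h⟩
  left_inv ψ := by
    funext i s
    dsimp only
    split_ifs with h
    · subst h; rfl
    · rfl
  right_inv p := by
    obtain ⟨y, w⟩ := p
    refine Prod.ext ?_ ?_
    · funext i; simp
    · funext i s
      simp [dif_neg s.2]

lemma Q_zero_iff (ψ : Fin (R + 1) → Fin (M + 1) → Fin n) :
    Q (M := M) χ 0 ψ ↔ χ (fun i => ψ i 0) := by
  constructor
  · intro H
    exact H (fun _ => 0) (fun i _ => rfl)
  · intro H t ht
    have : (fun i => ψ i (t i)) = fun i => ψ i 0 := by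
      funext i; rw [ht i (Nat.zero_le _)]
    rw [this]
    exact H

lemma card_ne_zero_subtype : Fintype.card {s : Fin (M + 1) // s ≠ 0} = M := by
  simp [Fintype.card_subtype_compl]

lemma cnt_zero : cnt (M := M) χ 0 = #(univ.filter χ) * (n ^ M) ^ (R + 1) := by
  rw [cnt, Finset.card_filter,
    ← Equiv.sum_comp ((rowE (n := n) (R := R) (M := M)).symm), Fintype.sum_prod_type]
  have hQ : ∀ (y : Fin (R + 1) → Fin n) w,
      (Q (M := M) χ 0 ((rowE (n := n)).symm (y, w)) ↔ χ y) := by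
    intro y w
    rw [Q_zero_iff]
    have : (fun i => ((rowE (n := n)).symm (y, w)) i 0) = y := by
      funext i; simp [rowE]
    rw [this]
  calc ∑ y : Fin (R + 1) → Fin n, ∑ w : Fin (R + 1) → {s : Fin (M + 1) // s ≠ 0} → Fin n,
        (if Q (M := M) χ 0 ((rowE (n := n)).symm (y, w)) then (1:ℕ) else 0)
      = ∑ y : Fin (R + 1) → Fin n, ∑ _w : Fin (R + 1) → {s : Fin (M + 1) // s ≠ 0} → Fin n,
        (if χ y then (1:ℕ) else 0) := by
        refine Finset.sum_congr rfl fun y _ => Finset.sum_congr rfl fun w _ => ?_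
        simp only [hQ y w]
    _ = ∑ y : Fin (R + 1) → Fin n, (if χ y then (1:ℕ) else 0) * (n ^ M) ^ (R + 1) := by
        refine Finset.sum_congr rfl fun y _ => ?_
        rw [Finset.sum_const, Finset.card_univ, Fintype.card_fun, Fintype.card_fun,
          card_ne_zero_subtype, Fintype.card_fin, Fintype.card_fin, smul_eq_mul, mul_comm]
    _ = _ := by rw [← Finset.sum_mul, ← Finset.card_filter]

lemma jensen {ι : Type*} [Fintype ι] (f : ι → ℝ) (hf : ∀ i, 0 ≤ f i) (M : ℕ) :
    (∑ i, f i) ^ (M + 1) ≤ (Fintype.card ι : ℝ) ^ M * ∑ i, f i ^ (M + 1) := by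
  rcases isEmpty_or_nonempty ι with h | h
  · rw [Finset.univ_eq_empty, Finset.sum_empty, Finset.sum_empty]
    rw [zero_pow (Nat.succ_ne_zero M)]
    simp
  · have hcard : (0:ℝ) < (Fintype.card ι : ℝ) ^ M := by
      have := Fintype.card_pos (α := ι)
      positivity
    have := pow_sum_div_card_le_sum_pow (s := univ) (f := f) (fun i _ => hf i) M
    have hpos : (0:ℝ) < (#(univ (α := ι)) : ℝ) ^ M := by rw [Finset.card_univ]; exact hcard
    rw [div_le_iff₀ hpos] at this
    calc (∑ i, f i) ^ (M + 1) ≤ (∑ i, f i ^ (M + 1)) * (#univ : ℝ) ^ M := this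
      _ = (Fintype.card ι : ℝ) ^ M * ∑ i, f i ^ (M + 1) := by
          rw [Finset.card_univ, mul_comm]

lemma cnt_step {j : ℕ} (hj : j < R + 1) :
    ((cnt (M := M) χ j : ℝ)) ^ (M + 1) ≤
      (cnt (M := M) χ (j + 1) : ℝ) * (n : ℝ) ^ ((R + 1) * (M + 1) * M) := by
  rw [cnt_eq χ hj, cnt_succ_eq χ hj]
  set jF : Fin (R + 1) := ⟨j, hj⟩
  set D : ({i : Fin (R + 1) // i ≠ jF} → Fin (M + 1) → Fin n) → ℕ :=
    fun ρ => #(univ.filter (fun x : Fin n => Rp χ j jF ρ x)) with hD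
  push_cast
  have hcard : (Fintype.card ({i : Fin (R + 1) // i ≠ jF} → Fin (M + 1) → Fin n) : ℝ)
      = ((n : ℝ) ^ (M + 1)) ^ R := by
    rw [Fintype.card_fun, Fintype.card_fun, Fintype.card_fin, Fintype.card_fin]
    have : Fintype.card {i : Fin (R + 1) // i ≠ jF} = R := by
      simp [Fintype.card_subtype_compl]
    rw [this]
    push_cast
    rfl
  calc ((∑ ρ, (D ρ : ℝ)) * (n:ℝ) ^ M) ^ (M + 1)
      = (∑ ρ, (D ρ : ℝ)) ^ (M + 1) * ((n:ℝ) ^ M) ^ (M + 1) := by rw [mul_pow]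
    _ ≤ ((Fintype.card ({i : Fin (R + 1) // i ≠ jF} → Fin (M + 1) → Fin n) : ℝ)) ^ M *
          (∑ ρ, (D ρ : ℝ) ^ (M + 1)) * ((n:ℝ) ^ M) ^ (M + 1) := by
        refine mul_le_mul_of_nonneg_right ?_ (by positivity)
        exact jensen _ (fun i => by positivity) M
    _ = (∑ ρ, (D ρ : ℝ) ^ (M + 1)) * ((((n:ℝ) ^ (M + 1)) ^ R) ^ M * ((n:ℝ) ^ M) ^ (M + 1)) := by
        rw [hcard]; ring
    _ = (∑ ρ, (D ρ : ℝ) ^ (M + 1)) * (n : ℝ) ^ ((R + 1) * (M + 1) * M) := by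
        have e1 : ((((n:ℝ) ^ (M + 1)) ^ R) ^ M * ((n:ℝ) ^ M) ^ (M + 1))
            = (n:ℝ) ^ ((R + 1) * (M + 1) * M) := by
          rw [← pow_mul, ← pow_mul, ← pow_mul, ← pow_add]
          congr 1
          ring
        rw [e1]

theorem cnt_last (θ : ℝ) (hθ : 0 ≤ θ) (hn : 0 < n)
    (hbase : θ * (n : ℝ) ^ (R + 1) ≤ (#(univ.filter χ) : ℝ)) :
    θ ^ ((M + 1) ^ (R + 1)) * (n : ℝ) ^ ((R + 1) * (M + 1)) ≤
      (cnt (M := M) χ (R + 1) : ℝ) := by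
  suffices H : ∀ j, j ≤ R + 1 →
      θ ^ ((M + 1) ^ j) * (n : ℝ) ^ ((R + 1) * (M + 1)) ≤ (cnt (M := M) χ j : ℝ) from
    H (R + 1) le_rfl
  intro j
  induction j with
  | zero =>
    intro _
    rw [cnt_zero χ]
    push_cast
    have hsplit : (n:ℝ) ^ ((R + 1) * (M + 1)) = (n:ℝ) ^ (R + 1) * ((n:ℝ) ^ M) ^ (R + 1) := by
      rw [← pow_mul, ← pow_add]
      congr 1
      ring
    rw [pow_zero, pow_one, hsplit, ← mul_assoc]
    exact mul_le_mul_of_nonneg_right hbase (by positivity)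
  | succ j ih =>
    intro hj
    have hj' : j < R + 1 := by omega
    have h1 := ih (by omega)
    have h2 := cnt_step (n := n) (M := M) χ hj'
    have key : θ ^ ((M + 1) ^ (j + 1)) * (n:ℝ) ^ ((R + 1) * (M + 1)) *
        (n:ℝ) ^ ((R + 1) * (M + 1) * M)
        = (θ ^ ((M + 1) ^ j) * (n:ℝ) ^ ((R + 1) * (M + 1))) ^ (M + 1) := by
      have eθ : (M + 1) ^ (j + 1) = (M + 1) ^ j * (M + 1) := pow_succ _ _
      have en : (R + 1) * (M + 1) + (R + 1) * (M + 1) * M = (R + 1) * (M + 1) * (M + 1) := by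
        ring
      rw [mul_pow, ← pow_mul, ← pow_mul, mul_assoc, ← pow_add, eθ, en]
    have h3 : (θ ^ ((M + 1) ^ j) * (n:ℝ) ^ ((R + 1) * (M + 1))) ^ (M + 1)
        ≤ ((cnt (M := M) χ j : ℝ)) ^ (M + 1) :=
      pow_le_pow_left₀ (by positivity) h1 _
    have h4 := le_trans h3 h2
    rw [← key] at h4
    have hpow : (0:ℝ) < (n:ℝ) ^ ((R + 1) * (M + 1) * M) := by positivity
    exact le_of_mul_le_mul_right h4 hpow

end Inner


section Outer

variable (E : Finset (Finset (Fin n))) (v : Fin n)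

/-- `φ` encodes a (possibly degenerate) copy of `K_k^k(m)`: every transversal is an edge. -/
def GoodF (φ : Fin (R + 2) → Fin (M + 2) → Fin n) : Prop :=
  ∀ t : Fin (R + 2) → Fin (M + 2), Finset.image (fun i => φ i (t i)) univ ∈ E

instance : DecidablePred (GoodF (R := R) (M := M) E) := fun φ => by
  unfold GoodF; infer_instance

/-- `x` together with the columns `ρ` (parts `2..k`) forms a good configuration. -/
def gp (ρ : Fin (R + 1) → Fin (M + 2) → Fin n) (x : Fin n) : Prop :=
  GoodF (R := R) (M := M) E (Fin.cons (fun _ => x) ρ)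

instance (ρ : Fin (R + 1) → Fin (M + 2) → Fin n) (x : Fin n) :
    Decidable (gp E ρ x) := by unfold gp; infer_instance

def consE : (Fin (R + 2) → Fin (M + 2) → Fin n) ≃
    (Fin (M + 2) → Fin n) × (Fin (R + 1) → Fin (M + 2) → Fin n) where
  toFun φ := (φ 0, fun i => φ i.succ)
  invFun p := Fin.cons p.1 p.2
  left_inv φ := by
    funext i
    dsimp only
    refine Fin.cases ?_ ?_ i
    · rw [Fin.cons_zero]
    · intro j; rw [Fin.cons_succ]
  right_inv p := by
    obtain ⟨c, ρ⟩ := p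
    refine Prod.ext ?_ ?_
    · dsimp only
      rw [Fin.cons_zero]
    · funext i
      dsimp only
      rw [Fin.cons_succ]

lemma goodF_cons_iff (c : Fin (M + 2) → Fin n) (ρ : Fin (R + 1) → Fin (M + 2) → Fin n) :
    GoodF (R := R) (M := M) E (Fin.cons c ρ) ↔ ∀ s, gp E ρ (c s) := by
  constructor
  · intro H s t
    have hfun : (fun i => Fin.cons (α := fun _ => Fin (M + 2) → Fin n)
          (fun _ => c s) ρ i (t i))
        = (fun i => Fin.cons (α := fun _ => Fin (M + 2) → Fin n) c ρ i
            (Fin.cons (α := fun _ => Fin (M + 2)) s (fun i' => t i'.succ) i)) := by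
      funext i
      refine Fin.cases ?_ ?_ i
      · rw [Fin.cons_zero, Fin.cons_zero, Fin.cons_zero]
      · intro j; rw [Fin.cons_succ, Fin.cons_succ, Fin.cons_succ]
    rw [hfun]
    exact H _
  · intro H t
    have hfun : (fun i => Fin.cons (α := fun _ => Fin (M + 2) → Fin n) c ρ i (t i))
        = (fun i => Fin.cons (α := fun _ => Fin (M + 2) → Fin n)
            (fun _ => c (t 0)) ρ i (t i)) := by
      funext i
      refine Fin.cases ?_ ?_ i
      · rw [Fin.cons_zero, Fin.cons_zero]
      · intro j; rw [Fin.cons_succ, Fin.cons_succ]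
    rw [hfun]
    exact H (t 0) t

lemma G_card_eq :
    #(univ.filter (fun φ : Fin (R + 2) → Fin (M + 2) → Fin n =>
        GoodF (R := R) (M := M) E φ ∧ φ 0 0 = v)) =
    ∑ ρ : Fin (R + 1) → Fin (M + 2) → Fin n,
      (if gp E ρ v then 1 else 0) * (#(univ.filter (fun x => gp E ρ x))) ^ (M + 1) := by
  rw [Finset.card_filter,
    ← Equiv.sum_comp ((consE (n := n) (R := R) (M := M)).symm), Fintype.sum_prod_type,
    Finset.sum_comm]
  refine Finset.sum_congr rfl fun ρ _ => ?_
  have hpt : ∀ c : Fin (M + 2) → Fin n,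
      (if (GoodF (R := R) (M := M) E ((consE (n := n)).symm (c, ρ)) ∧
          ((consE (n := n)).symm (c, ρ)) 0 0 = v) then (1:ℕ) else 0)
      = ∏ s : Fin (M + 2), ((if (0 : Fin (M + 2)) = s then (if c s = v then 1 else 0) else 1) *
          (if gp E ρ (c s) then 1 else 0)) := by
    intro c
    rw [Finset.prod_mul_distrib, Finset.prod_ite_eq, Fintype.prod_boole]
    simp only [Finset.mem_univ, if_true]
    have h1 : ((consE (n := n) (R := R) (M := M)).symm (c, ρ)) = Fin.cons c ρ := rfl
    rw [h1]
    have h2 : (Fin.cons (α := fun _ => Fin (M + 2) → Fin n) c ρ) 0 0 = c 0 := by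
      rw [Fin.cons_zero]
    rw [h2]
    have hG : GoodF (R := R) (M := M) E (Fin.cons c ρ) ↔ ∀ s, gp E ρ (c s) :=
      goodF_cons_iff E c ρ
    by_cases hA : (∀ s, gp E ρ (c s)) <;> by_cases hB : c 0 = v <;> simp [hG, hA, hB]
  calc ∑ c : Fin (M + 2) → Fin n,
        (if (GoodF (R := R) (M := M) E ((consE (n := n)).symm (c, ρ)) ∧
          ((consE (n := n)).symm (c, ρ)) 0 0 = v) then (1:ℕ) else 0)
      = ∑ c : Fin (M + 2) → Fin n, ∏ s : Fin (M + 2),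
          ((if (0 : Fin (M + 2)) = s then (if c s = v then (1:ℕ) else 0) else 1) *
            (if gp E ρ (c s) then 1 else 0)) := Finset.sum_congr rfl fun c _ => hpt c
    _ = ∏ s : Fin (M + 2), ∑ x : Fin n,
          ((if (0 : Fin (M + 2)) = s then (if x = v then (1:ℕ) else 0) else 1) *
            (if gp E ρ x then 1 else 0)) := by
        rw [← Fintype.prod_sum (fun (s : Fin (M + 2)) (x : Fin n) =>
          (if (0 : Fin (M + 2)) = s then (if x = v then (1:ℕ) else 0) else 1) *
            (if gp E ρ x then 1 else 0))]
    _ = _ := by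
        rw [← Finset.mul_prod_erase univ _ (Finset.mem_univ (0 : Fin (M + 2)))]
        congr 1
        · have : ∀ x : Fin n,
              ((if (0 : Fin (M + 2)) = 0 then (if x = v then (1:ℕ) else 0) else 1) *
                (if gp E ρ x then 1 else 0))
              = (if x = v then (if gp E ρ x then (1:ℕ) else 0) else 0) := by
            intro x
            rw [if_pos rfl]
            by_cases hx : x = v <;> simp [hx]
          rw [Finset.sum_congr rfl (fun x _ => this x), Finset.sum_ite_eq' univ v]
          simp
        · have hcon : ∀ s ∈ univ.erase (0 : Fin (M + 2)),
              (∑ x : Fin n, ((if (0 : Fin (M + 2)) = s then (if x = v then (1:ℕ) else 0) else 1) *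
                (if gp E ρ x then 1 else 0)))
              = #(univ.filter (fun x => gp E ρ x)) := by
            intro s hs
            have hs0 : ¬ ((0 : Fin (M + 2)) = s) := (Finset.ne_of_mem_erase hs).symm
            simp only [if_neg hs0, one_mul]
            rw [Finset.card_filter]
          rw [Finset.prod_congr rfl hcon, Finset.prod_const,
            Finset.card_erase_of_mem (Finset.mem_univ _), Finset.card_univ, Fintype.card_fin]
          simp


lemma pairsum :
    ∑ ρ : Fin (R + 1) → Fin (M + 2) → Fin n,
      (if gp E ρ v then (1:ℕ) else 0) * #(univ.filter (fun x => gp E ρ x))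
    = ∑ x : Fin n, #(univ.filter (fun ρ : Fin (R + 1) → Fin (M + 2) → Fin n =>
        gp E ρ v ∧ gp E ρ x)) := by
  have h1 : ∀ ρ : Fin (R + 1) → Fin (M + 2) → Fin n,
      (if gp E ρ v then (1:ℕ) else 0) * #(univ.filter (fun x => gp E ρ x))
      = ∑ x : Fin n, (if (gp E ρ v ∧ gp E ρ x) then 1 else 0) := by
    intro ρ
    rw [Finset.card_filter, Finset.mul_sum]
    refine Finset.sum_congr rfl fun x _ => ?_
    by_cases hv1 : gp E ρ v <;> by_cases h2 : gp E ρ x <;> simp [hv1, h2]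
  rw [Finset.sum_congr rfl (fun ρ _ => h1 ρ), Finset.sum_comm]
  refine Finset.sum_congr rfl fun x _ => ?_
  rw [Finset.card_filter]

/-- The pair predicate: `y` spans a `(k-1)`-set adjacent to both `v` and `x`. -/
def χpair (x : Fin n) (y : Fin (R + 1) → Fin n) : Prop :=
  insert v (Finset.image y univ) ∈ E ∧ insert x (Finset.image y univ) ∈ E

instance (x : Fin n) : DecidablePred (χpair (R := R) E v x) := fun y => by
  unfold χpair; infer_instance

lemma image_cons_eq (u : Fin n) (ψ : Fin (R + 1) → Fin (M + 2) → Fin n)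
    (t : Fin (R + 2) → Fin (M + 2)) :
    Finset.image (fun i => Fin.cons (α := fun _ => Fin (M + 2) → Fin n)
        (fun _ => u) ψ i (t i)) univ
    = insert u (Finset.image (fun i : Fin (R + 1) => ψ i (t i.succ)) univ) := by
  ext a
  simp only [Finset.mem_image, Finset.mem_insert, Finset.mem_univ, true_and]
  rw [Fin.exists_fin_succ]
  simp [Fin.cons_zero, Fin.cons_succ, eq_comm]

lemma Q_imp_gp (x : Fin n) (ψ : Fin (R + 1) → Fin (M + 2) → Fin n)
    (H : Q (M := M + 1) (χpair (R := R) E v x) (R + 1) ψ) :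
    gp E ψ v ∧ gp E ψ x := by
  have key : ∀ t : Fin (R + 1) → Fin (M + 2), χpair (R := R) E v x (fun i => ψ i (t i)) :=
    fun t => H t (fun i hi => absurd i.isLt (by omega))
  constructor
  · intro t
    rw [image_cons_eq]
    exact (key (fun i => t i.succ)).1
  · intro t
    rw [image_cons_eq]
    exact (key (fun i => t i.succ)).2

lemma cnt_le_pair (x : Fin n) :
    cnt (M := M + 1) (χpair (R := R) E v x) (R + 1) ≤
      #(univ.filter (fun ρ : Fin (R + 1) → Fin (M + 2) → Fin n =>
        gp E ρ v ∧ gp E ρ x)) := by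
  apply Finset.card_le_card
  apply Finset.monotone_filter_right
  intro ψ _ H
  exact Q_imp_gp E v x ψ H


lemma degOn_eq_card (w : Fin n) :
    degOn E (R + 2) {w} = #(univ.filter (fun S : Finset (Fin n) =>
      S.card = R + 1 ∧ Disjoint S {w} ∧ S ∪ {w} ∈ E)) := by
  unfold degOn
  have hset : {S : Finset (Fin n) | S.card = (R + 2) - ({w} : Finset (Fin n)).card ∧
      Disjoint S {w} ∧ S ∪ {w} ∈ E}
      = ↑(univ.filter (fun S : Finset (Fin n) =>
        S.card = R + 1 ∧ Disjoint S {w} ∧ S ∪ {w} ∈ E)) := by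
    ext S
    simp
  rw [hset, Set.ncard_coe_finset]

lemma choose_lower (hn : 2 * (R + 1) ≤ n) :
    ((n:ℝ) / 2) ^ (R + 1) ≤ ((R+1).factorial : ℝ) * (n.choose (R + 1) : ℝ) := by
  have h1 : ((n + 1 - (R + 1)) : ℕ) ^ (R + 1) ≤ n.descFactorial (R + 1) :=
    Nat.pow_sub_le_descFactorial n (R + 1)
  have h2 : n.descFactorial (R + 1) = (R+1).factorial * n.choose (R + 1) :=
    Nat.descFactorial_eq_factorial_mul_choose n (R + 1)
  have h3 : (n:ℝ) / 2 ≤ ((n + 1 - (R + 1) : ℕ) : ℝ) := by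
    have he : n + 1 - (R + 1) = n - R := by omega
    rw [he, Nat.cast_sub (by omega)]
    have : (2 * (R + 1) : ℝ) ≤ n := by exact_mod_cast hn
    push_cast
    linarith
  calc ((n:ℝ)/2)^(R+1) ≤ ((n + 1 - (R+1) : ℕ):ℝ)^(R+1) :=
        pow_le_pow_left₀ (by positivity) h3 _
    _ ≤ (n.descFactorial (R+1) : ℝ) := by exact_mod_cast h1
    _ = _ := by exact_mod_cast h2

lemma pair_base (γ : ℝ) (hγ : 0 < γ) (hn : 2 * (R + 1) ≤ n) (x : Fin n)
    (hv : (1/2 + γ) * (n.choose (R + 1) : ℝ) ≤ (degOn E (R + 2) {v} : ℝ))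
    (hx : (1/2 + γ) * (n.choose (R + 1) : ℝ) ≤ (degOn E (R + 2) {x} : ℝ)) :
    (γ / (2 ^ (R + 1) * ((R+1).factorial : ℝ))) * (n:ℝ) ^ (R + 1) ≤
      (#(univ.filter (χpair (R := R) E v x)) : ℝ) := by
  classical
  set Av := univ.filter (fun S : Finset (Fin n) =>
    S.card = R + 1 ∧ Disjoint S {v} ∧ S ∪ {v} ∈ E) with hAvdef
  set Ax := univ.filter (fun S : Finset (Fin n) =>
    S.card = R + 1 ∧ Disjoint S {x} ∧ S ∪ {x} ∈ E) with hAxdef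
  have hP : #(univ.filter (fun S : Finset (Fin n) => S.card = R + 1)) = n.choose (R + 1) := by
    rw [← Fintype.card_subtype]
    rw [Fintype.card_finset_len, Fintype.card_fin]
  have hsub : Av ∪ Ax ⊆ univ.filter (fun S : Finset (Fin n) => S.card = R + 1) := by
    intro S hS
    rw [Finset.mem_union] at hS
    rcases hS with h | h <;>
      · rw [Finset.mem_filter] at h ⊢
        exact ⟨h.1, h.2.1⟩
  have hunion := Finset.card_union_add_card_inter Av Ax
  have hUle : #(Av ∪ Ax) ≤ n.choose (R + 1) := hP ▸ Finset.card_le_card hsub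
  have hcard2 : #Av + #Ax ≤ n.choose (R + 1) + #(Av ∩ Ax) := by omega
  have hinj : #(Av ∩ Ax) ≤ #(univ.filter (χpair (R := R) E v x)) := by
    have himg : ∀ S : Finset (Fin n), ∀ hc : S.card = R + 1,
        Finset.image (fun i : Fin (R+1) =>
          if h : S.card = R + 1 then S.orderEmbOfFin h i else v) univ = S := by
      intro S hc
      have hfS : (fun i : Fin (R+1) =>
          if h : S.card = R + 1 then S.orderEmbOfFin h i else v)
          = fun i => S.orderEmbOfFin hc i := by
        funext i; rw [dif_pos hc]
      rw [hfS]
      apply Finset.coe_injective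
      rw [Finset.coe_image, Finset.coe_univ, Set.image_univ]
      exact S.range_orderEmbOfFin hc
    apply Finset.card_le_card_of_injOn (fun S => fun i : Fin (R + 1) =>
      if h : S.card = R + 1 then S.orderEmbOfFin h i else v)
    · intro S hS
      rw [Finset.mem_coe, Finset.mem_inter, hAvdef, hAxdef, Finset.mem_filter, Finset.mem_filter] at hS
      obtain ⟨⟨-, hc, -, hv1⟩, ⟨-, -, -, hx1⟩⟩ := hS
      beta_reduce
      rw [Finset.mem_coe, Finset.mem_filter]
      refine ⟨Finset.mem_univ _, ?_, ?_⟩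
      · rw [himg S hc, Finset.insert_eq, Finset.union_comm]
        exact hv1
      · rw [himg S hc, Finset.insert_eq, Finset.union_comm]
        exact hx1
    · intro S1 h1 S2 h2 heq
      rw [Finset.mem_coe, Finset.mem_inter, hAvdef, Finset.mem_filter] at h1 h2
      have hc1 : S1.card = R + 1 := h1.1.2.1
      have hc2 : S2.card = R + 1 := h2.1.2.1
      have := congrArg (fun f : Fin (R + 1) → Fin n => Finset.image f univ) heq
      simpa only [himg S1 hc1, himg S2 hc2] using this
  -- numeric chain
  have hAv : (1/2 + γ) * (n.choose (R + 1) : ℝ) ≤ (#Av : ℝ) := by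
    rw [hAvdef, ← degOn_eq_card]; exact hv
  have hAx : (1/2 + γ) * (n.choose (R + 1) : ℝ) ≤ (#Ax : ℝ) := by
    rw [hAxdef, ← degOn_eq_card]; exact hx
  have hch := choose_lower (R := R) (n := n) hn
  have hF : (0:ℝ) < ((R+1).factorial : ℝ) := by
    exact_mod_cast Nat.factorial_pos (R+1)
  have h2R : (0:ℝ) < 2 ^ (R + 1) := by positivity
  have hcast : (#Av : ℝ) + (#Ax : ℝ) ≤ (n.choose (R + 1) : ℝ) + (#(Av ∩ Ax) : ℝ) := by
    exact_mod_cast hcard2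
  have hinter : 2 * γ * (n.choose (R + 1) : ℝ) ≤ (#(Av ∩ Ax) : ℝ) := by linarith
  have hcnt : 2 * γ * (n.choose (R + 1) : ℝ) ≤ (#(univ.filter (χpair (R := R) E v x)) : ℝ) := by
    have := hinj
    have : (#(Av ∩ Ax) : ℝ) ≤ (#(univ.filter (χpair (R := R) E v x)) : ℝ) := by
      exact_mod_cast hinj
    linarith
  -- θ * n^{R+1} ≤ γ * choose ≤ 2γ choose
  have hθC : (γ / (2 ^ (R + 1) * ((R+1).factorial : ℝ))) * (n:ℝ) ^ (R + 1) ≤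
      γ * (n.choose (R + 1) : ℝ) := by
    have hpow : ((n:ℝ)/2) ^ (R+1) = (n:ℝ)^(R+1) / 2^(R+1) := div_pow _ _ _
    have h6 : (n:ℝ)^(R+1) / 2^(R+1) ≤ ((R+1).factorial : ℝ) * (n.choose (R + 1) : ℝ) := by
      rw [← hpow]; exact hch
    calc (γ / (2 ^ (R + 1) * ((R+1).factorial : ℝ))) * (n:ℝ) ^ (R + 1)
        = (γ / ((R+1).factorial : ℝ)) * ((n:ℝ)^(R+1) / 2^(R+1)) := by
          rw [div_mul_eq_mul_div, div_mul_div_comm,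
            mul_comm ((2:ℝ)^(R+1)) ((R+1).factorial : ℝ)]
      _ ≤ (γ / ((R+1).factorial : ℝ)) * (((R+1).factorial : ℝ) * (n.choose (R + 1) : ℝ)) := by
          apply mul_le_mul_of_nonneg_left h6 (by positivity)
      _ = γ * (n.choose (R + 1) : ℝ) := by
          rw [← mul_assoc, div_mul_cancel₀ γ hF.ne']
  have hγC : γ * (n.choose (R + 1) : ℝ) ≤ 2 * γ * (n.choose (R + 1) : ℝ) := by
    have : (0:ℝ) ≤ γ * (n.choose (R + 1) : ℝ) := by positivity
    linarith
  linarith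


lemma single_pair_card (p q : Fin (R + 2) × Fin (M + 2)) (hpq : p ≠ q) :
    #(univ.filter (fun φ : Fin (R + 2) → Fin (M + 2) → Fin n =>
      φ p.1 p.2 = φ q.1 q.2 ∧ φ 0 0 = v)) ≤ n ^ ((R + 2) * (M + 2) - 2) := by
  classical
  set z : Fin (R + 2) × Fin (M + 2) := (0, 0) with hz
  set w : Fin (R + 2) × Fin (M + 2) := if q = z then p else q with hw
  have hwz : w ≠ z := by
    by_cases h : q = z
    · rw [hw, if_pos h]
      rw [← h]
      exact hpq
    · rw [hw, if_neg h]
      exact h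
  have hsub : Fintype.card {u : Fin (R + 2) × Fin (M + 2) // u ≠ w ∧ u ≠ z}
      = (R + 2) * (M + 2) - 2 := by
    rw [Fintype.card_subtype]
    have hset : univ.filter (fun u : Fin (R + 2) × Fin (M + 2) => u ≠ w ∧ u ≠ z)
        = univ \ {w, z} := by
      ext u
      simp [not_or]
    rw [hset, Finset.card_sdiff_of_subset (fun u _ => Finset.mem_univ u), Finset.card_univ]
    have h2 : #({w, z} : Finset (Fin (R + 2) × Fin (M + 2))) = 2 := by
      rw [Finset.card_insert_of_notMem (by simpa using hwz), Finset.card_singleton]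
    rw [h2, Fintype.card_prod, Fintype.card_fin, Fintype.card_fin]
  have hle : #(univ.filter (fun φ : Fin (R + 2) → Fin (M + 2) → Fin n =>
      φ p.1 p.2 = φ q.1 q.2 ∧ φ 0 0 = v))
      ≤ Fintype.card ({u : Fin (R + 2) × Fin (M + 2) // u ≠ w ∧ u ≠ z} → Fin n) := by
    rw [← Finset.card_univ]
    apply Finset.card_le_card_of_injOn
      (fun φ => (fun u : {u : Fin (R + 2) × Fin (M + 2) // u ≠ w ∧ u ≠ z} => φ u.1.1 u.1.2))
      (fun _ _ => Finset.mem_univ _)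
    intro φ₁ h1 φ₂ h2 heq
    rw [Finset.mem_coe, Finset.mem_filter] at h1 h2
    obtain ⟨-, he1, hv1⟩ := h1
    obtain ⟨-, he2, hv2⟩ := h2
    have hval : ∀ u : Fin (R + 2) × Fin (M + 2), u ≠ w → u ≠ z → φ₁ u.1 u.2 = φ₂ u.1 u.2 :=
      fun u hu1 hu2 => congrFun heq ⟨u, hu1, hu2⟩
    have hzval : φ₁ z.1 z.2 = φ₂ z.1 z.2 := by
      show φ₁ (0:Fin (R+2)) (0:Fin (M+2)) = φ₂ 0 0
      rw [hv1, hv2]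
    have hwval : φ₁ w.1 w.2 = φ₂ w.1 w.2 := by
      by_cases h : q = z
      · -- w = p, and φ p = φ q = φ z = v
        have hwp : w = p := by rw [hw, if_pos h]
        rw [hwp, he1, he2, h]
        exact hzval
      · -- w = q, φ q = φ p
        have hwq : w = q := by rw [hw, if_neg h]
        rw [hwq, ← he1, ← he2]
        by_cases hp : p = z
        · rw [hp]; exact hzval
        · have hpw : p ≠ w := by rw [hwq]; exact hpq
          exact hval p hpw hp
    funext i s
    by_cases hiw : (i, s) = w
    · have : φ₁ (i, s).1 (i, s).2 = φ₂ (i, s).1 (i, s).2 := by rw [hiw]; exact hwval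
      exact this
    · by_cases hiz : (i, s) = z
      · have : φ₁ (i, s).1 (i, s).2 = φ₂ (i, s).1 (i, s).2 := by rw [hiz]; exact hzval
        exact this
      · exact hval (i, s) hiw hiz
  calc #(univ.filter (fun φ : Fin (R + 2) → Fin (M + 2) → Fin n =>
        φ p.1 p.2 = φ q.1 q.2 ∧ φ 0 0 = v))
      ≤ Fintype.card ({u : Fin (R + 2) × Fin (M + 2) // u ≠ w ∧ u ≠ z} → Fin n) := hle
    _ = n ^ ((R + 2) * (M + 2) - 2) := by
        rw [Fintype.card_fun, Fintype.card_fin, hsub]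

lemma bad_card :
    #(univ.filter (fun φ : Fin (R + 2) → Fin (M + 2) → Fin n =>
      φ 0 0 = v ∧ ¬ Function.Injective (fun p : Fin (R + 2) × Fin (M + 2) => φ p.1 p.2)))
    ≤ ((R + 2) * (M + 2)) ^ 2 * n ^ ((R + 2) * (M + 2) - 2) := by
  classical
  set Pairs : Finset ((Fin (R + 2) × Fin (M + 2)) × (Fin (R + 2) × Fin (M + 2))) :=
    univ.filter (fun pq => pq.1 ≠ pq.2) with hPairs
  have hsub : univ.filter (fun φ : Fin (R + 2) → Fin (M + 2) → Fin n =>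
      φ 0 0 = v ∧ ¬ Function.Injective (fun p : Fin (R + 2) × Fin (M + 2) => φ p.1 p.2))
      ⊆ Pairs.biUnion (fun pq => univ.filter (fun φ : Fin (R + 2) → Fin (M + 2) → Fin n =>
        φ pq.1.1 pq.1.2 = φ pq.2.1 pq.2.2 ∧ φ 0 0 = v)) := by
    intro φ hφ
    rw [Finset.mem_filter] at hφ
    obtain ⟨-, hv0, hni⟩ := hφ
    rw [Function.not_injective_iff] at hni
    obtain ⟨a, b, hab, hne⟩ := hni
    rw [Finset.mem_biUnion]
    refine ⟨(a, b), ?_, ?_⟩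
    · rw [hPairs, Finset.mem_filter]
      exact ⟨Finset.mem_univ _, hne⟩
    · rw [Finset.mem_filter]
      exact ⟨Finset.mem_univ _, hab, hv0⟩
  calc #(univ.filter (fun φ : Fin (R + 2) → Fin (M + 2) → Fin n =>
        φ 0 0 = v ∧ ¬ Function.Injective (fun p : Fin (R + 2) × Fin (M + 2) => φ p.1 p.2)))
      ≤ #(Pairs.biUnion (fun pq => univ.filter
          (fun φ : Fin (R + 2) → Fin (M + 2) → Fin n =>
            φ pq.1.1 pq.1.2 = φ pq.2.1 pq.2.2 ∧ φ 0 0 = v))) := Finset.card_le_card hsub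
    _ ≤ ∑ pq ∈ Pairs, #(univ.filter (fun φ : Fin (R + 2) → Fin (M + 2) → Fin n =>
          φ pq.1.1 pq.1.2 = φ pq.2.1 pq.2.2 ∧ φ 0 0 = v)) := Finset.card_biUnion_le
    _ ≤ ∑ _pq ∈ Pairs, n ^ ((R + 2) * (M + 2) - 2) := by
        refine Finset.sum_le_sum fun pq hpq => ?_
        rw [hPairs, Finset.mem_filter] at hpq
        exact single_pair_card v pq.1 pq.2 hpq.2
    _ = #Pairs * n ^ ((R + 2) * (M + 2) - 2) := by rw [Finset.sum_const, smul_eq_mul]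
    _ ≤ ((R + 2) * (M + 2)) ^ 2 * n ^ ((R + 2) * (M + 2) - 2) := by
        apply Nat.mul_le_mul_right
        calc #Pairs ≤ #(univ : Finset ((Fin (R + 2) × Fin (M + 2)) ×
              (Fin (R + 2) × Fin (M + 2)))) := Finset.card_le_card (Finset.filter_subset _ _)
          _ = ((R + 2) * (M + 2)) ^ 2 := by
              rw [Finset.card_univ]
              simp [Fintype.card_prod, Fintype.card_fin]
              ring


lemma to_embedding (φ : Fin (R + 2) → Fin (M + 2) → Fin n)
    (hG : GoodF (R := R) (M := M) E φ) (hv0 : φ 0 0 = v)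
    (hinj : Function.Injective (fun p : Fin (R + 2) × Fin (M + 2) => φ p.1 p.2)) :
    (∀ e ∈ multipartiteEdges (R + 2) (M + 2),
      e.map ⟨fun p => φ p.1 p.2, hinj⟩ ∈ E) ∧
    v ∈ Finset.map (⟨fun p => φ p.1 p.2, hinj⟩ :
      Fin (R + 2) × Fin (M + 2) ↪ Fin n) univ := by
  constructor
  · intro e he
    rw [multipartiteEdges, Finset.mem_filter] at he
    obtain ⟨-, he⟩ := he
    choose a ha using fun i => Finset.card_eq_one.mp (he i)
    have hai : ∀ i, a i ∈ e ∧ (a i).1 = i := by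
      intro i
      have hm : a i ∈ e.filter (fun u => u.1 = i) := by
        rw [ha i]; exact Finset.mem_singleton_self _
      rw [Finset.mem_filter] at hm
      exact hm
    have hee : e = Finset.image (fun i => a i) univ := by
      ext u
      simp only [Finset.mem_image, Finset.mem_univ, true_and]
      constructor
      · intro hu
        refine ⟨u.1, ?_⟩
        have hm : u ∈ e.filter (fun u' => u'.1 = u.1) := Finset.mem_filter.mpr ⟨hu, rfl⟩
        rw [ha u.1, Finset.mem_singleton] at hm
        exact hm.symm
      · rintro ⟨i, rfl⟩
        exact (hai i).1
    rw [Finset.map_eq_image, hee, Finset.image_image]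
    have hcomp : ((fun p : Fin (R + 2) × Fin (M + 2) => φ p.1 p.2) ∘ fun i => a i)
        = fun i => φ i ((a i).2) := by
      funext i
      show φ (a i).1 (a i).2 = φ i (a i).2
      rw [(hai i).2]
    rw [show ((⟨fun p => φ p.1 p.2, hinj⟩ : Fin (R + 2) × Fin (M + 2) ↪ Fin n) :
        Fin (R + 2) × Fin (M + 2) → Fin n) = fun p => φ p.1 p.2 from rfl, hcomp]
    exact hG (fun i => (a i).2)
  · rw [Finset.mem_map]
    exact ⟨(0, 0), Finset.mem_univ _, hv0⟩

end Outer

end CopiesAux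

/-- In a `k`-graph with minimum vertex degree at least `(1/2 + γ) C(n,k-1)`, every vertex
lies in at least `c n^{km-1}` copies of `K_k^k(m)`. -/
theorem copies_of_multipartite_through_vertex (k m : ℕ) (hk : 2 ≤ k) (hm : 2 ≤ m)
    (γ : ℝ) (hγ : 0 < γ) :
    ∃ c : ℝ, 0 < c ∧ ∃ n₀ : ℕ, ∀ n : ℕ, n₀ ≤ n →
      ∀ E : Finset (Finset (Fin n)), (∀ e ∈ E, e.card = k) →
      (∀ v : Fin n, (1 / 2 + γ) * (n.choose (k - 1) : ℝ) ≤ (degOn E k {v} : ℝ)) →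
      ∀ v : Fin n,
        c * (n : ℝ) ^ (k * m - 1) ≤
          (({f : Fin k × Fin m ↪ Fin n |
              (∀ e ∈ multipartiteEdges k m, e.map f ∈ E) ∧
              v ∈ Finset.map f Finset.univ}).ncard : ℝ) := by

  classical
  obtain ⟨R, rfl⟩ : ∃ R, k = R + 2 := ⟨k - 2, by omega⟩
  obtain ⟨M, rfl⟩ : ∃ M, m = M + 2 := ⟨m - 2, by omega⟩
  have hfacpos : (0:ℝ) < ((R+1).factorial : ℝ) := by exact_mod_cast (R+1).factorial_pos
  set θ : ℝ := γ / (2 ^ (R + 1) * ((R+1).factorial : ℝ)) with hθdef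
  have hθpos : 0 < θ := div_pos hγ (mul_pos (by positivity) hfacpos)
  set θ2 : ℝ := θ ^ ((M + 2) ^ (R + 1)) with hθ2def
  have hθ2pos : 0 < θ2 := pow_pos hθpos _
  set c0 : ℝ := θ2 ^ (M + 1) with hc0def
  have hc0pos : 0 < c0 := pow_pos hθ2pos _
  set d : ℕ := (R + 2) * (M + 2) with hddef
  set A : ℕ := (R + 1) * (M + 2) with hAdef
  have hdA0 : d = A + (M + 2) := by rw [hddef, hAdef]; ring
  have hdA1 : d - 1 = A + (M + 1) := by omega
  have hdA2 : d - 2 = A + M := by omega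
  refine ⟨c0 / 2, half_pos hc0pos,
    max (2 * (R + 1) + 2) (⌈(2 * (d:ℝ) ^ 2) / c0⌉₊ + 1), ?_⟩
  intro n hn E hE hdeg v
  have hn1 : 2 * (R + 1) ≤ n := by
    have := le_trans (le_max_left (2 * (R + 1) + 2) (⌈(2 * (d:ℝ) ^ 2) / c0⌉₊ + 1)) hn
    omega
  have hnpos : 0 < n := by omega
  have hn2 : (2 * (d:ℝ) ^ 2) / c0 ≤ (n : ℝ) := by
    have h1 : (⌈(2 * (d:ℝ) ^ 2) / c0⌉₊ + 1 : ℕ) ≤ n :=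
      le_trans (le_max_right _ _) hn
    calc (2 * (d:ℝ) ^ 2) / c0 ≤ (⌈(2 * (d:ℝ) ^ 2) / c0⌉₊ : ℝ) := Nat.le_ceil _
      _ ≤ (n : ℝ) := by exact_mod_cast le_trans (Nat.le_succ _) h1
  have hbase : ∀ x : Fin n, θ * (n:ℝ) ^ (R + 1) ≤
      (#(univ.filter (CopiesAux.χpair (R := R) E v x)) : ℝ) := by
    intro x
    exact CopiesAux.pair_base E v γ hγ hn1 x (hdeg v) (hdeg x)
  have hsup : ∀ x : Fin n, θ2 * (n:ℝ) ^ A ≤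
      (#(univ.filter (fun ρ : Fin (R + 1) → Fin (M + 2) → Fin n =>
        CopiesAux.gp E ρ v ∧ CopiesAux.gp E ρ x)) : ℝ) := by
    intro x
    have h1 := CopiesAux.cnt_last (M := M + 1) (χ := CopiesAux.χpair (R := R) E v x)
      θ hθpos.le hnpos (hbase x)
    have h2 := CopiesAux.cnt_le_pair (R := R) (M := M) E v x
    calc θ2 * (n:ℝ) ^ A
        = θ ^ ((M + 1 + 1) ^ (R + 1)) * (n:ℝ) ^ ((R + 1) * (M + 1 + 1)) := by
          rw [hθ2def, hAdef]
      _ ≤ (CopiesAux.cnt (M := M + 1) (CopiesAux.χpair (R := R) E v x) (R + 1) : ℝ) := h1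
      _ ≤ _ := by exact_mod_cast h2
  have hsum : θ2 * (n:ℝ) ^ A * (n:ℝ) ≤
      ((∑ ρ : Fin (R + 1) → Fin (M + 2) → Fin n,
        (if CopiesAux.gp E ρ v then (1:ℕ) else 0) *
          #(univ.filter (fun x => CopiesAux.gp E ρ x)) : ℕ) : ℝ) := by
    rw [CopiesAux.pairsum E v]
    push_cast
    calc θ2 * (n:ℝ) ^ A * (n:ℝ)
        = ∑ _x : Fin n, θ2 * (n:ℝ) ^ A := by
          rw [Finset.sum_const, Finset.card_univ, Fintype.card_fin, nsmul_eq_mul]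
          ring
      _ ≤ ∑ x : Fin n, (#(univ.filter (fun ρ : Fin (R + 1) → Fin (M + 2) → Fin n =>
            CopiesAux.gp E ρ v ∧ CopiesAux.gp E ρ x)) : ℝ) :=
          Finset.sum_le_sum fun x _ => hsup x
  set Gcard : ℕ := #(univ.filter (fun φ : Fin (R + 2) → Fin (M + 2) → Fin n =>
    CopiesAux.GoodF (R := R) (M := M) E φ ∧ φ 0 0 = v)) with hGdef
  have hG : c0 * (n:ℝ) ^ (A + (M + 1)) ≤ (Gcard : ℝ) := by
    have hGeq := CopiesAux.G_card_eq (R := R) (M := M) E v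
    set f : (Fin (R + 1) → Fin (M + 2) → Fin n) → ℕ := fun ρ =>
      (if CopiesAux.gp E ρ v then (1:ℕ) else 0) *
        #(univ.filter (fun x => CopiesAux.gp E ρ x)) with hfdef
    have hGeq2 : (Gcard : ℝ) = ∑ ρ, ((f ρ : ℝ)) ^ (M + 1) := by
      rw [hGdef, hGeq]
      push_cast
      refine Finset.sum_congr rfl fun ρ _ => ?_
      rw [hfdef]
      by_cases h : CopiesAux.gp E ρ v <;> simp [h]
    have hcardρ : (Fintype.card (Fin (R + 1) → Fin (M + 2) → Fin n) : ℝ)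
        = (n:ℝ) ^ ((M + 2) * (R + 1)) := by
      rw [Fintype.card_fun, Fintype.card_fun, Fintype.card_fin, Fintype.card_fin,
        Fintype.card_fin]
      push_cast
      rw [← pow_mul]
    have hjen := CopiesAux.jensen (fun ρ => (f ρ : ℝ)) (fun ρ => by positivity) M
    have hsum2 : (θ2 * (n:ℝ) ^ A * (n:ℝ)) ^ (M + 1) ≤
        ((Fintype.card (Fin (R + 1) → Fin (M + 2) → Fin n) : ℝ)) ^ M *
          ∑ ρ, ((f ρ : ℝ)) ^ (M + 1) := by
      refine le_trans (pow_le_pow_left₀ (by positivity) ?_ (M + 1)) hjen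
      calc θ2 * (n:ℝ) ^ A * (n:ℝ) ≤ _ := hsum
        _ = ∑ ρ, (f ρ : ℝ) := by rw [Nat.cast_sum]
    rw [hcardρ, ← hGeq2] at hsum2
    have hkey : (θ2 * (n:ℝ) ^ A * (n:ℝ)) ^ (M + 1)
        = c0 * (n:ℝ) ^ (A + (M + 1)) * (n:ℝ) ^ (A * M) := by
      have e1 : ((n:ℝ)^A)^(M+1) * (n:ℝ)^(M+1) = (n:ℝ)^(A+(M+1)) * (n:ℝ)^(A*M) := by
        rw [← pow_mul, ← pow_add, ← pow_add]
        congr 1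
        ring
      calc (θ2 * (n:ℝ)^A * (n:ℝ))^(M+1)
          = θ2^(M+1) * (((n:ℝ)^A)^(M+1) * (n:ℝ)^(M+1)) := by ring
        _ = c0 * ((n:ℝ)^(A+(M+1)) * (n:ℝ)^(A*M)) := by rw [e1, ← hc0def]
        _ = c0 * (n:ℝ)^(A+(M+1)) * (n:ℝ)^(A*M) := by ring
    have hAM : ((n:ℝ) ^ ((M + 2) * (R + 1))) ^ M = (n:ℝ) ^ (A * M) := by
      rw [← pow_mul, hAdef]
      congr 1
      ring
    rw [hkey, hAM, mul_comm ((n:ℝ) ^ (A * M)) (Gcard : ℝ)] at hsum2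
    have hpos : (0:ℝ) < (n:ℝ) ^ (A * M) := by positivity
    exact le_of_mul_le_mul_right hsum2 hpos
  set Bad : Finset (Fin (R + 2) → Fin (M + 2) → Fin n) :=
    univ.filter (fun φ => φ 0 0 = v ∧
      ¬ Function.Injective (fun p : Fin (R + 2) × Fin (M + 2) => φ p.1 p.2)) with hBaddef
  set T : Finset (Fin (R + 2) → Fin (M + 2) → Fin n) :=
    univ.filter (fun φ => (CopiesAux.GoodF (R := R) (M := M) E φ ∧ φ 0 0 = v) ∧
      Function.Injective (fun p : Fin (R + 2) × Fin (M + 2) => φ p.1 p.2)) with hTdef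
  have hsplit : Gcard ≤ #T + #Bad := by
    have hsub : univ.filter (fun φ : Fin (R + 2) → Fin (M + 2) → Fin n =>
        CopiesAux.GoodF (R := R) (M := M) E φ ∧ φ 0 0 = v) ⊆ T ∪ Bad := by
      intro φ hφ
      rw [Finset.mem_filter] at hφ
      rw [Finset.mem_union, hTdef, hBaddef, Finset.mem_filter, Finset.mem_filter]
      by_cases h : Function.Injective (fun p : Fin (R + 2) × Fin (M + 2) => φ p.1 p.2)
      · exact Or.inl ⟨Finset.mem_univ _, ⟨hφ.2, h⟩⟩
      · exact Or.inr ⟨Finset.mem_univ _, hφ.2.2, h⟩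
    calc Gcard ≤ #(T ∪ Bad) := Finset.card_le_card hsub
      _ ≤ #T + #Bad := Finset.card_union_le _ _
  have hbad : (#Bad : ℝ) ≤ (d:ℝ) ^ 2 * (n:ℝ) ^ (A + M) := by
    have h1 := CopiesAux.bad_card (M := M) (R := R) (n := n) v
    rw [← hBaddef] at h1
    rw [← hdA2, hddef]
    exact_mod_cast h1
  set Starget : Set (Fin (R + 2) × Fin (M + 2) ↪ Fin n) :=
    {f : Fin (R + 2) × Fin (M + 2) ↪ Fin n |
      (∀ e ∈ multipartiteEdges (R + 2) (M + 2), e.map f ∈ E) ∧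
      v ∈ Finset.map f Finset.univ} with hSdef
  have hfinS : Starget.Finite := Set.toFinite _
  have hTle : #T ≤ Starget.ncard := by
    rcases Finset.eq_empty_or_nonempty T with hTe | ⟨φ0, hφ0⟩
    · simp [hTe]
    · have hφ0' := Finset.mem_filter.mp hφ0
      set j0 : Fin (R + 2) × Fin (M + 2) ↪ Fin n :=
        ⟨fun p => φ0 p.1 p.2, hφ0'.2.2⟩ with hj0def
      rw [Set.ncard_eq_toFinset_card _ hfinS]
      apply Finset.card_le_card_of_injOn (fun φ =>
        if h : Function.Injective (fun p : Fin (R + 2) × Fin (M + 2) => φ p.1 p.2)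
        then (⟨fun p => φ p.1 p.2, h⟩ : Fin (R + 2) × Fin (M + 2) ↪ Fin n) else j0)
      · intro φ hφ
        have hφ' := Finset.mem_filter.mp hφ
        obtain ⟨-, ⟨hGood, hv0⟩, hinjφ⟩ := hφ'
        beta_reduce
        rw [dif_pos hinjφ, Finset.mem_coe, Set.Finite.mem_toFinset]
        exact CopiesAux.to_embedding E v φ hGood hv0 hinjφ
      · intro φ1 h1 φ2 h2 heq
        rw [Finset.mem_coe] at h1 h2
        have hinj1 := (Finset.mem_filter.mp h1).2.2
        have hinj2 := (Finset.mem_filter.mp h2).2.2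
        simp only at heq
        rw [dif_pos hinj1, dif_pos hinj2] at heq
        funext i s
        exact congrFun (congrArg (fun f : Fin (R + 2) × Fin (M + 2) ↪ Fin n =>
          (f : Fin (R + 2) × Fin (M + 2) → Fin n)) heq) (i, s)
  have hT2 : (c0/2) * (n:ℝ) ^ (A + (M + 1)) ≤ (#T : ℝ) := by
    have hsplitR : (Gcard : ℝ) ≤ (#T : ℝ) + (#Bad : ℝ) := by exact_mod_cast hsplit
    have hpowsplit : (n:ℝ) ^ (A + (M + 1)) = (n:ℝ) ^ (A + M) * n := by
      rw [← pow_succ, Nat.add_assoc]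
    have h2 : (d:ℝ) ^ 2 ≤ (c0/2) * n := by
      have h3 := (div_le_iff₀ hc0pos).mp hn2
      linarith
    have hsmall : (d:ℝ) ^ 2 * (n:ℝ) ^ (A + M) ≤ (c0/2) * (n:ℝ) ^ (A + (M + 1)) := by
      rw [hpowsplit]
      calc (d:ℝ) ^ 2 * (n:ℝ) ^ (A + M) ≤ ((c0/2) * n) * (n:ℝ) ^ (A + M) :=
            mul_le_mul_of_nonneg_right h2 (by positivity)
        _ = (c0/2) * ((n:ℝ) ^ (A + M) * n) := by ring
    linarith [hG, hbad]
  have hTleR : (#T : ℝ) ≤ (Starget.ncard : ℝ) := by exact_mod_cast hTle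
  rw [hdA1]
  linarith [hT2, hTleR]
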